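/- Let n ≥ 2, 0 < α, β < 2, 1 ≤ p < ∞, and let u ∈ C^{1,1}_loc ∩ L_α, v ∈ C^{1,1}_loc ∩ L_β be a positive solution pair of the system (-Δ)^{α/2}u + u = v u^{p-1}, (-Δ)^{β/2}v = u^p on ℝⁿ. Assume there exist constants C₁ > 0, γ > 0, and R > 0 such that u(x) ≥ C₁/|x|^γ for all |x| ≥ R. Let λ ∈ ℝ and let x̄ ∈ Σ_λ satisfy |x̄| ≥ R and U_λ(x̄) < 0. Then (-Δ)^{α/2}U_λ(x̄) ≥ u^{p-1}(x̄^λ) V_λ(x̄) + ((p/C₁) · u^{p-1}(x̄) · v(x̄) · |x̄|^γ − 1) · U_λ(x̄). -/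

import Mathlib

open MeasureTheory Filter Metric Set Bornology

noncomputable section

/-- The space `ℝⁿ`. -/
abbrev En (n : ℕ) := EuclideanSpace ℝ (Fin n)

/-- Membership in the weighted space `L_σ`. -/
def MemL (n : ℕ) (σ : ℝ) (w : En n → ℝ) : Prop :=
  LocallyIntegrable w volume ∧
    Integrable (fun x : En n => |w x| / (1 + ‖x‖ ^ ((n : ℝ) + σ))) volume

/-- `C^{1,1}_loc` on an open set `Ω`: near every point of `Ω`, `w` is
differentiable with Lipschitz-continuous derivative. -/
def C11locOn (n : ℕ) (Ω : Set (En n)) (w : En n → ℝ) : Prop :=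
  ∀ x ∈ Ω, ∃ ε > 0, ∃ K : NNReal, ball x ε ⊆ Ω ∧
    (∀ y ∈ ball x ε, DifferentiableAt ℝ w y) ∧
    LipschitzOnWith K (fderiv ℝ w) (ball x ε)

/-- `C^{1,1}_loc` on all of `ℝⁿ`. -/
def C11loc (n : ℕ) (w : En n → ℝ) : Prop := C11locOn n univ w

/-- `HasFracLap n σ c w x L` : the fractional Laplacian `(-Δ)^{σ/2} w`, with
normalization constant `c = C_{n,σ} > 0`, exists at `x` as a principal value
and is equal to `L`. -/
def HasFracLap (n : ℕ) (σ c : ℝ) (w : En n → ℝ) (x : En n) (L : ℝ) : Prop :=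
  Tendsto
    (fun ε : ℝ => c * ∫ y in {y : En n | ε ≤ dist x y},
        (w x - w y) / dist x y ^ ((n : ℝ) + σ))
    (nhdsWithin 0 (Ioi 0)) (nhds L)

/-- Reflection `x ↦ x^λ` about the hyperplane `T_λ = {x : x₁ = λ}`. -/
def reflPt (n : ℕ) [NeZero n] (l : ℝ) (x : En n) : En n :=
  WithLp.toLp 2 (fun i => if i = 0 then 2 * l - x 0 else x i)

/-- The half space `Σ_λ = {x : x₁ < λ}`. -/
def halfSpace (n : ℕ) [NeZero n] (l : ℝ) : Set (En n) := {x | x 0 < l}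


/-! ### Auxiliary lemmas -/

private lemma key_rpow {q a b : ℝ} (hq : 0 ≤ q) (ha : 0 < a) (hab : a ≤ b) :
    b ^ q - a ^ q ≤ (q + 1) * b ^ q / b * (b - a) := by
  have hb : 0 < b := ha.trans_le hab
  set t := a / b with ht_def
  have ht : 0 < t := div_pos ha hb
  have ht1 : t ≤ 1 := (div_le_one hb).2 hab
  have claim : 1 - t ^ q ≤ (q + 1) * (1 - t) := by
    rcases le_total q 1 with hq1 | hq1
    · have h1 : t ^ (1:ℝ) ≤ t ^ q := Real.rpow_le_rpow_of_exponent_ge ht ht1 hq1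
      rw [Real.rpow_one] at h1
      nlinarith
    · have hs : (-1 : ℝ) ≤ t - 1 := by linarith
      have := one_add_mul_self_le_rpow_one_add hs hq1
      have h2 : (1 + (t-1) : ℝ) = t := by ring
      rw [h2] at this
      nlinarith
  have htq : t ^ q = a ^ q / b ^ q := Real.div_rpow ha.le hb.le q
  have hbq : 0 < b ^ q := Real.rpow_pos_of_pos hb q
  have := mul_le_mul_of_nonneg_left claim hbq.le
  rw [htq] at this
  have e1 : b ^ q * (1 - a ^ q / b ^ q) = b ^ q - a ^ q := by field_simp
  have e2 : b ^ q * ((q + 1) * (1 - a / b)) = (q + 1) * b ^ q / b * (b - a) := by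
    field_simp
  linarith [e1 ▸ e2 ▸ this]

section reflFacts
variable (n : ℕ) [NeZero n] (l : ℝ)

private lemma reflPt_invol (x : En n) : reflPt n l (reflPt n l x) = x := by
  ext i
  by_cases h : i = 0
  · subst h; simp [reflPt]
  · simp [reflPt, h]

private lemma reflPt_dist (x y : En n) :
    dist (reflPt n l x) (reflPt n l y) = dist x y := by
  rw [EuclideanSpace.dist_eq, EuclideanSpace.dist_eq]
  congr 1
  apply Finset.sum_congr rfl
  intro i _
  by_cases h : i = 0
  · subst h
    simp only [reflPt, if_true, Real.dist_eq]
    rw [show 2*l - x 0 - (2*l - y 0) = -(x 0 - y 0) by ring, abs_neg]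
  · simp [reflPt, h]

private lemma reflPt_measurable : Measurable (reflPt n l) := by
  apply (WithLp.measurable_toLp 2 _).comp
  apply measurable_pi_lambda
  intro i
  by_cases h : i = 0 <;> simp only [reflPt, h, if_true, if_false]
  · exact measurable_const.sub (((measurable_pi_apply 0).comp (WithLp.measurable_ofLp 2 _) : Measurable fun x : En n => x 0))
  · exact ((measurable_pi_apply i).comp (WithLp.measurable_ofLp 2 _) : Measurable fun x : En n => x i)

private def reflEquiv : En n ≃ᵐ En n where
  toFun := reflPt n l
  invFun := reflPt n l
  left_inv := reflPt_invol n l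
  right_inv := reflPt_invol n l
  measurable_toFun := reflPt_measurable n l
  measurable_invFun := reflPt_measurable n l

private lemma reflPt_measurePreserving :
    MeasurePreserving (reflPt n l) (volume : Measure (En n)) volume := by
  have e := EuclideanSpace.volume_preserving_symm_measurableEquiv_toLp (Fin n)
  have hpi : MeasurePreserving
      (fun (x : Fin n → ℝ) i => if i = 0 then 2 * l - x i else x i)
      (volume : Measure (Fin n → ℝ)) volume := by
    apply MeasureTheory.volume_preserving_pi (f := fun i t => if i = 0 then 2 * l - t else t)
    intro i
    by_cases h : i = 0 <;> simp only [h, if_true, if_false]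
    · have : (fun t : ℝ => 2 * l - t) = (fun t : ℝ => 2 * l + t) ∘ Neg.neg := by
        funext t; simp [sub_eq_add_neg]
      rw [this]
      exact (measurePreserving_add_left volume (2*l)).comp (Measure.measurePreserving_neg volume)
    · exact MeasurePreserving.id _
  have : reflPt n l = (MeasurableEquiv.toLp 2 (Fin n → ℝ)).symm.symm ∘
      (fun (x : Fin n → ℝ) i => if i = 0 then 2 * l - x i else x i) ∘
      ((MeasurableEquiv.toLp 2 (Fin n → ℝ)).symm) := by
    funext x; ext i
    by_cases h : i = 0
    · subst h; rfl
    · simp [reflPt, h, MeasurableEquiv.coe_toLp, MeasurableEquiv.coe_toLp_symm]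
  rw [this]
  exact (e.symm).comp (hpi.comp e)

end reflFacts

private lemma measS {n : ℕ} (x : En n) (ε : ℝ) :
    MeasurableSet {y : En n | ε ≤ dist x y} :=
  (isClosed_le continuous_const (continuous_const.dist continuous_id)).measurableSet

private lemma integrableOn_kernel {n : ℕ} (σ : ℝ) (hσ : 0 < σ) (x : En n) {ε : ℝ} (hε : 0 < ε) :
    IntegrableOn (fun y : En n => 1 / dist x y ^ ((n : ℝ) + σ)) {y | ε ≤ dist x y} volume := by
  set s : ℝ := (n : ℝ) + σ with hs_def
  have hs : 0 < s := by positivity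
  have hint : Integrable (fun y : En n => (1/ε+1) ^ s * (1 + ‖y - x‖) ^ (-s)) volume := by
    have h0 : Integrable (fun z : En n => (1 + ‖z‖) ^ (-s)) volume := by
      apply integrable_one_add_norm
      rw [finrank_euclideanSpace_fin]
      simpa [hs_def] using hσ
    exact (h0.comp_sub_right x).const_mul _
  apply Integrable.mono' hint.integrableOn
  · have hc : Continuous fun y : En n => dist x y ^ s :=
      (continuous_const.dist continuous_id).rpow_const (fun y => Or.inr hs.le)
    exact (measurable_const.div hc.measurable).aestronglyMeasurable
  · rw [ae_restrict_iff' (measS x ε)]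
    refine ae_of_all _ fun y hy => ?_
    have hd : (0:ℝ) < dist x y := lt_of_lt_of_le hε hy
    have hds : (0:ℝ) < dist x y ^ s := Real.rpow_pos_of_pos hd s
    have hnorm : ‖y - x‖ = dist x y := by rw [← dist_eq_norm, dist_comm]
    have h1 : (1 + dist x y) ^ s ≤ (1/ε+1) ^ s * dist x y ^ s := by
      rw [← Real.mul_rpow (by positivity) hd.le]
      apply Real.rpow_le_rpow (by positivity) _ hs.le
      have : (1:ℝ) ≤ dist x y / ε := (one_le_div hε).2 hy
      calc 1 + dist x y ≤ dist x y / ε + dist x y := by linarith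
        _ = (1/ε+1) * dist x y := by ring
    rw [Real.norm_eq_abs, abs_of_pos (by positivity), hnorm, Real.rpow_neg (by positivity),
      ← one_div]
    rw [div_le_iff₀ hds]
    calc (1:ℝ) = (1 + dist x y) ^ s / (1 + dist x y) ^ s := by
          rw [div_self (by positivity)]
      _ ≤ (1/ε+1) ^ s * dist x y ^ s / (1 + dist x y) ^ s := by gcongr
      _ = (1/ε+1) ^ s * (1 / (1 + dist x y) ^ s) * dist x y ^ s := by ring

private lemma integrableOn_fracIntegrand {n : ℕ} {σ : ℝ} (hσ : 0 < σ) {w : En n → ℝ}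
    (hw : MemL n σ w) (x : En n) {ε : ℝ} (hε : 0 < ε) :
    IntegrableOn (fun y : En n => (w x - w y) / dist x y ^ ((n : ℝ) + σ))
      {y | ε ≤ dist x y} volume := by
  set s : ℝ := (n : ℝ) + σ with hs_def
  have hs : 0 < s := by positivity
  have hc : Continuous fun y : En n => dist x y ^ s :=
    (continuous_const.dist continuous_id).rpow_const (fun y => Or.inr hs.le)
  set C2 : ℝ := ε ^ (-s) + (‖x‖/ε + 1) ^ s with hC2_def
  have h1 : IntegrableOn (fun y : En n => w x * (1 / dist x y ^ s))
      {y | ε ≤ dist x y} volume := (integrableOn_kernel σ hσ x hε).const_mul _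
  have h2 : IntegrableOn (fun y : En n => w y / dist x y ^ s)
      {y | ε ≤ dist x y} volume := by
    apply Integrable.mono' ((hw.2.const_mul C2).integrableOn)
    · have hfe : (fun y : En n => w y / dist x y ^ s) = fun y => w y * (dist x y ^ s)⁻¹ := by
        funext y; rw [div_eq_mul_inv]
      rw [hfe]
      exact (hw.1.aestronglyMeasurable.mul
        (hc.measurable.inv).aestronglyMeasurable).restrict
    · rw [ae_restrict_iff' (measS x ε)]
      refine ae_of_all _ fun y hy => ?_
      have hd : (0:ℝ) < dist x y := lt_of_lt_of_le hε hy
      have hds : (0:ℝ) < dist x y ^ s := Real.rpow_pos_of_pos hd s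
      have hden : (0:ℝ) < 1 + ‖y‖ ^ s := by positivity
      have hkey : 1 + ‖y‖ ^ s ≤ C2 * dist x y ^ s := by
        have hyd : ε ≤ dist x y := hy
        have e1 : (1:ℝ) ≤ ε ^ (-s) * dist x y ^ s := by
          have he : ε ^ s ≤ dist x y ^ s := Real.rpow_le_rpow hε.le hyd hs.le
          rw [Real.rpow_neg hε.le, inv_mul_eq_div, le_div_iff₀ (by positivity), one_mul]
          exact he
        have e2 : ‖y‖ ^ s ≤ (‖x‖/ε + 1) ^ s * dist x y ^ s := by
          rw [← Real.mul_rpow (by positivity) hd.le]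
          apply Real.rpow_le_rpow (norm_nonneg _) _ hs.le
          have hyx : ‖y‖ ≤ ‖x‖ + dist x y := by
            calc ‖y‖ = ‖x - (x - y)‖ := by rw [sub_sub_cancel]
              _ ≤ ‖x‖ + ‖x - y‖ := norm_sub_le _ _
              _ = ‖x‖ + dist x y := by rw [dist_eq_norm]
          have : ‖x‖ ≤ ‖x‖/ε * dist x y := by
            rw [div_mul_eq_mul_div, le_div_iff₀ hε]
            have hyd : ε ≤ dist x y := hy
            nlinarith [mul_le_mul_of_nonneg_left hyd (norm_nonneg x)]
          calc ‖y‖ ≤ ‖x‖ + dist x y := hyx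
            _ ≤ ‖x‖/ε * dist x y + dist x y := by linarith
            _ = (‖x‖/ε + 1) * dist x y := by ring
        calc 1 + ‖y‖ ^ s ≤ ε ^ (-s) * dist x y ^ s + (‖x‖/ε + 1) ^ s * dist x y ^ s := by
              linarith
          _ = C2 * dist x y ^ s := by rw [hC2_def]; ring
      have : |w y| / dist x y ^ s ≤ C2 * (|w y| / (1 + ‖y‖ ^ s)) := by
        rw [mul_div_assoc']
        rw [div_le_div_iff₀ hds hden]
        calc |w y| * (1 + ‖y‖ ^ s) ≤ |w y| * (C2 * dist x y ^ s) :=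
            mul_le_mul_of_nonneg_left hkey (abs_nonneg _)
          _ = C2 * |w y| * dist x y ^ s := by ring
      calc ‖w y / dist x y ^ s‖ = |w y| / dist x y ^ s := by
            rw [Real.norm_eq_abs, abs_div, abs_of_pos hds]
        _ ≤ C2 * (|w y| / (1 + ‖y‖ ^ s)) := this
  have : (fun y : En n => (w x - w y) / dist x y ^ s)
      = fun y => w x * (1 / dist x y ^ s) - w y / dist x y ^ s := by
    funext y; rw [sub_div, mul_one_div]
  rw [this]
  exact h1.sub h2

/-- the key estimate (r-4) for `(-Δ)^{α/2} U_λ` at a point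
where `U_λ < 0`. -/
theorem statement12
    (n : ℕ) [NeZero n] (hn : 2 ≤ n)
    (α β : ℝ) (hα : 0 < α ∧ α < 2) (hβ : 0 < β ∧ β < 2)
    (p : ℝ) (hp : 1 ≤ p)
    (cα cβ : ℝ) (hcα : 0 < cα) (hcβ : 0 < cβ)
    (u v : En n → ℝ)
    (hu_reg : C11loc n u) (hu_L : MemL n α u)
    (hv_reg : C11loc n v) (hv_L : MemL n β v)
    (hu_pos : ∀ x, 0 < u x) (hv_pos : ∀ x, 0 < v x)
    (heq_u : ∀ x, HasFracLap n α cα u x (v x * u x ^ (p - 1) - u x))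
    (heq_v : ∀ x, HasFracLap n β cβ v x (u x ^ p))
    (C₁ γ R : ℝ) (hC₁ : 0 < C₁) (hγ : 0 < γ) (hR : 0 < R)
    (hdecay : ∀ x : En n, R ≤ ‖x‖ → C₁ / ‖x‖ ^ γ ≤ u x)
    (lam : ℝ) (xb : En n) (hxb : xb ∈ halfSpace n lam) (hxbR : R ≤ ‖xb‖)
    (hUneg : u (reflPt n lam xb) - u xb < 0) :
    ∀ L, HasFracLap n α cα (fun x => u (reflPt n lam x) - u x) xb L →
      u (reflPt n lam xb) ^ (p - 1) * (v (reflPt n lam xb) - v xb) +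
        (p / C₁ * u xb ^ (p - 1) * v xb * ‖xb‖ ^ γ - 1) *
          (u (reflPt n lam xb) - u xb) ≤ L := by
  intro L hL
  obtain ⟨hα1, _⟩ := hα
  set r : En n → En n := reflPt n lam with hr_def
  set s : ℝ := (n : ℝ) + α with hs_def
  have hmp := reflPt_measurePreserving n lam
  have hemb : MeasurableEmbedding r := (reflEquiv n lam).measurableEmbedding
  have hpre : ∀ ε : ℝ, r ⁻¹' {z : En n | ε ≤ dist (r xb) z} = {y : En n | ε ≤ dist xb y} := by
    intro ε; ext y
    simp only [mem_preimage, mem_setOf_eq, hr_def, reflPt_dist n lam xb y]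
  have h1 := heq_u (r xb)
  have h2 := heq_u xb
  -- the function in hL agrees with the difference on Ioi 0
  have heqfun : ∀ ε ∈ Ioi (0:ℝ),
      (cα * ∫ y in {y : En n | ε ≤ dist xb y},
        ((fun x => u (reflPt n lam x) - u x) xb - (fun x => u (reflPt n lam x) - u x) y)
          / dist xb y ^ s)
      = (cα * ∫ z in {z : En n | ε ≤ dist (r xb) z}, (u (r xb) - u z) / dist (r xb) z ^ s)
        - (cα * ∫ y in {y : En n | ε ≤ dist xb y}, (u xb - u y) / dist xb y ^ s) := by
    intro ε hε
    have hε' : 0 < ε := hε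
    have hi2 : IntegrableOn (fun y : En n => (u xb - u y) / dist xb y ^ s)
        {y | ε ≤ dist xb y} volume := integrableOn_fracIntegrand hα1 hu_L xb hε'
    have hi1' : IntegrableOn (fun z : En n => (u (r xb) - u z) / dist (r xb) z ^ s)
        {z | ε ≤ dist (r xb) z} volume := integrableOn_fracIntegrand hα1 hu_L (r xb) hε'
    have hi1 : IntegrableOn (fun y : En n => (u (r xb) - u (r y)) / dist xb y ^ s)
        {y | ε ≤ dist xb y} volume := by
      have := (hmp.integrableOn_comp_preimage hemb
        (f := fun z : En n => (u (r xb) - u z) / dist (r xb) z ^ s)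
        (s := {z : En n | ε ≤ dist (r xb) z})).2 hi1'
      rw [hpre ε] at this
      apply this.congr_fun _ (measS xb ε)
      intro y _
      simp only [Function.comp_apply, hr_def, reflPt_dist n lam xb y]
    have hch : ∫ y in {y : En n | ε ≤ dist xb y}, (u (r xb) - u (r y)) / dist xb y ^ s
        = ∫ z in {z : En n | ε ≤ dist (r xb) z}, (u (r xb) - u z) / dist (r xb) z ^ s := by
      have := hmp.setIntegral_preimage_emb hemb
        (fun z : En n => (u (r xb) - u z) / dist (r xb) z ^ s)
        {z : En n | ε ≤ dist (r xb) z}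
      rw [hpre ε] at this
      rw [← this]
      apply setIntegral_congr_fun (measS xb ε)
      intro y _
      simp only [hr_def, reflPt_dist n lam xb y]
    have hsplit : (fun y : En n =>
          ((fun x => u (reflPt n lam x) - u x) xb - (fun x => u (reflPt n lam x) - u x) y)
            / dist xb y ^ s)
        = fun y : En n => (u (r xb) - u (r y)) / dist xb y ^ s
            - (u xb - u y) / dist xb y ^ s := by
      funext y
      simp only [hr_def]
      rw [← sub_div]
      ring_nf
    rw [hsplit, integral_sub hi1 hi2, hch]
    ring
  have hT : Tendsto (fun ε : ℝ =>
      (cα * ∫ z in {z : En n | ε ≤ dist (r xb) z}, (u (r xb) - u z) / dist (r xb) z ^ s)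
        - (cα * ∫ y in {y : En n | ε ≤ dist xb y}, (u xb - u y) / dist xb y ^ s))
      (nhdsWithin 0 (Ioi 0))
      (nhds ((v (r xb) * u (r xb) ^ (p - 1) - u (r xb))
        - (v xb * u xb ^ (p - 1) - u xb))) := h1.sub h2
  have hL' : Tendsto (fun ε : ℝ =>
      cα * ∫ y in {y : En n | ε ≤ dist xb y},
        ((fun x => u (reflPt n lam x) - u x) xb - (fun x => u (reflPt n lam x) - u x) y)
          / dist xb y ^ s)
      (nhdsWithin 0 (Ioi 0))
      (nhds ((v (r xb) * u (r xb) ^ (p - 1) - u (r xb))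
        - (v xb * u xb ^ (p - 1) - u xb))) := by
    apply hT.congr'
    filter_upwards [self_mem_nhdsWithin] with ε hε
    exact (heqfun ε hε).symm
  have hLeq : L = (v (r xb) * u (r xb) ^ (p - 1) - u (r xb))
      - (v xb * u xb ^ (p - 1) - u xb) := tendsto_nhds_unique hL hL'
  -- final arithmetic
  set a : ℝ := u (reflPt n lam xb) with ha_def
  set b : ℝ := u xb with hb_def
  set V : ℝ := v (reflPt n lam xb) with hV_def
  set W : ℝ := v xb with hW_def
  have hapos : 0 < a := hu_pos _
  have hbpos : 0 < b := hu_pos _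
  have hWpos : 0 < W := hv_pos _
  have hba : 0 < b - a := by simpa [ha_def, hb_def] using sub_neg.mp hUneg
  have hxnorm : 0 < ‖xb‖ := lt_of_lt_of_le hR hxbR
  have hnx : 0 < ‖xb‖ ^ γ := Real.rpow_pos_of_pos hxnorm γ
  have hbq : 0 < b ^ (p-1) := Real.rpow_pos_of_pos hbpos _
  have step1 : b ^ (p-1) - a ^ (p-1) ≤ p * b ^ (p-1) / b * (b - a) := by
    have := key_rpow (q := p - 1) (a := a) (b := b) (by linarith) hapos (by linarith)
    have hpe : (p - 1 + 1) = p := by ring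
    rw [hpe] at this
    exact this
  have hinv : 1 / b ≤ ‖xb‖ ^ γ / C₁ := by
    have hd := hdecay xb hxbR
    rw [div_le_div_iff₀ hbpos hC₁]
    rw [div_le_iff₀ hnx] at hd
    linarith
  have step2 : p * b ^ (p-1) / b ≤ p / C₁ * b ^ (p-1) * ‖xb‖ ^ γ := by
    have hp0 : 0 < p := by linarith
    calc p * b ^ (p-1) / b = p * b ^ (p-1) * (1 / b) := by ring
      _ ≤ p * b ^ (p-1) * (‖xb‖ ^ γ / C₁) := by
          apply mul_le_mul_of_nonneg_left hinv (by positivity)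
      _ = p / C₁ * b ^ (p-1) * ‖xb‖ ^ γ := by ring
  have c1 : W * (b ^ (p-1) - a ^ (p-1)) ≤ W * (p * b ^ (p-1) / b * (b - a)) :=
    mul_le_mul_of_nonneg_left step1 hWpos.le
  have c2 : W * (p * b ^ (p-1) / b * (b - a))
      ≤ W * (p / C₁ * b ^ (p-1) * ‖xb‖ ^ γ * (b - a)) := by
    apply mul_le_mul_of_nonneg_left _ hWpos.le
    exact mul_le_mul_of_nonneg_right step2 hba.le
  rw [hLeq]
  nlinarith [c1, c2]
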